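/- arXiv:2004.06788 — 4 statements merged into one kernel-verified Lean document; each statement's English description precedes it below -/
import Mathlib

section
/- Let k ≥ 1 and let X be a k-colorable graph that contains a clique on k−1 vertices. Then the k-coloring complex B(X) is k-colorable. -/
open SimpleGraph

/-- A `k`-coloring of a graph `X`: a partition of the vertex set into `k`
(possibly empty) independent sets, the color classes of the coloring. -/
def IsColoring {V : Type*} (k : ℕ) (X : SimpleGraph V) (c : Fin k → Set V) : Prop :=
  (∀ v : V, ∃! i : Fin k, v ∈ c i) ∧
  ∀ i : Fin k, ∀ u ∈ c i, ∀ w ∈ c i, ¬ X.Adj u w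

/-- `S` occurs as a color class in some `k`-coloring of `X`. -/
def IsColorClass {V : Type*} (k : ℕ) (X : SimpleGraph V) (S : Set V) : Prop :=
  ∃ c : Fin k → Set V, IsColoring k X c ∧ ∃ i, c i = S

/-- The `k`-coloring complex `B(X)`: vertices are the color classes of
`k`-colorings of `X`, two of them adjacent if they occur together in some
`k`-coloring of `X`. -/
def ColoringComplex {V : Type*} (k : ℕ) (X : SimpleGraph V) :
    SimpleGraph {S : Set V // IsColorClass k X S} where
  Adj C D := C ≠ D ∧ ∃ c : Fin k → Set V,
    IsColoring k X c ∧ (∃ i, c i = C.1) ∧ (∃ j, c j = D.1)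
  symm := by
    constructor
    rintro C D ⟨hne, c, hc, hi, hj⟩
    exact ⟨hne.symm, c, hc, hj, hi⟩
  loopless := by constructor; rintro C ⟨hne, -⟩; exact hne rfl

/-- The canonical map `φ_X`, sending a vertex `v` to the set of all color
classes containing `v`. -/
def phi {V : Type*} (k : ℕ) (X : SimpleGraph V) (v : V) :
    Set {S : Set V // IsColorClass k X S} :=
  {C | v ∈ C.1}

/-- `X` is reflexive for `k`-colorings: the canonical map `φ_X` is a graph
isomorphism from `X` onto `B²(X) = B(B(X))`. -/
def IsReflexive {V : Type*} (k : ℕ) (X : SimpleGraph V) : Prop :=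
  ∃ f : X ≃g ColoringComplex k (ColoringComplex k X),
    ∀ v : V, (f v : {T // IsColorClass k (ColoringComplex k X) T}).1 = phi k X v

/-- `X` is colorful for `k`-colorings: any two distinct vertices lie in
different color classes of some `k`-coloring of `X`. -/
def Colorful {V : Type*} (k : ℕ) (X : SimpleGraph V) : Prop :=
  ∀ x y : V, x ≠ y → ∃ c : Fin k → Set V, IsColoring k X c ∧
    ∃ i j : Fin k, i ≠ j ∧ x ∈ c i ∧ y ∈ c j

/-- If `X` is a `k`-colorable graph containing a clique on `k - 1` vertices,
then the `k`-coloring complex `B(X)` is `k`-colorable. -/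
theorem coloringComplex_colorable {V : Type*} (k : ℕ) (hk : 1 ≤ k)
    (X : SimpleGraph V)
    (hcol : ∃ c : Fin k → Set V, IsColoring k X c)
    (s : Finset V) (hcard : s.card = k - 1) (hclique : X.IsClique ↑s) :
    ∃ c : Fin k → Set {S : Set V // IsColorClass k X S},
      IsColoring k (ColoringComplex k X) c := by
  classical
  have hs : Fintype.card {x // x ∈ s} = k - 1 := by simpa using hcard
  let e : {x // x ∈ s} ≃ Fin (k - 1) := Fintype.equivFinOfCardEq hs
  let ι : {x // x ∈ s} → Fin k := fun v => Fin.castLE (Nat.sub_le k 1) (e v)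
  have hι_lt : ∀ v, (ι v : ℕ) < k - 1 := fun v => (e v).isLt
  have hι_inj : Function.Injective ι := fun a b h =>
    e.injective (Fin.castLE_injective _ h)
  let last : Fin k := ⟨k - 1, by omega⟩
  let f : {S : Set V // IsColorClass k X S} → Fin k := fun C =>
    if h : ∃ v : {x // x ∈ s}, (v : V) ∈ C.1 then ι h.choose else last
  have key : ∀ C D, (ColoringComplex k X).Adj C D → f C ≠ f D := by
    rintro C D ⟨hne, c, hc, ⟨i, hi⟩, ⟨j, hj⟩⟩ hfeq
    have hij : i ≠ j := by
      rintro rfl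
      exact hne (Subtype.ext (hi.symm.trans hj))
    by_cases hC : ∃ v : {x // x ∈ s}, (v : V) ∈ C.1
    · by_cases hD : ∃ v : {x // x ∈ s}, (v : V) ∈ D.1
      · have h1 : f C = ι hC.choose := dif_pos hC
        have h2 : f D = ι hD.choose := dif_pos hD
        have hvw : hC.choose = hD.choose := hι_inj (by rw [← h1, ← h2, hfeq])
        have hvC : (hC.choose : V) ∈ c i := by rw [hi]; exact hC.choose_spec
        have hvD : (hC.choose : V) ∈ c j := by
          rw [hvw, hj]; exact hD.choose_spec
        exact hij ((hc.1 (hC.choose : V)).unique hvC hvD)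
      · have h1 : f C = ι hC.choose := dif_pos hC
        have h2 : f D = last := dif_neg hD
        have := hι_lt hC.choose
        rw [h1, h2] at hfeq
        have : (ι hC.choose : ℕ) = k - 1 := congrArg Fin.val hfeq
        omega
    · by_cases hD : ∃ v : {x // x ∈ s}, (v : V) ∈ D.1
      · have h1 : f C = last := dif_neg hC
        have h2 : f D = ι hD.choose := dif_pos hD
        have := hι_lt hD.choose
        rw [h1, h2] at hfeq
        have : (ι hD.choose : ℕ) = k - 1 := (congrArg Fin.val hfeq).symm
        omega
      · -- neither C nor D contains a clique vertex
        let g : {x // x ∈ s} → Fin k := fun v => (hc.1 (v : V)).choose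
        have hg : ∀ v, (v : V) ∈ c (g v) := fun v => (hc.1 (v : V)).choose_spec.1
        have ginj : Function.Injective g := by
          intro a b hab
          by_contra hne'
          have hadj : X.Adj (a : V) (b : V) :=
            hclique a.2 b.2 (fun h => hne' (Subtype.ext h))
          exact hc.2 (g a) _ (hg a) _ (hab ▸ hg b) hadj
        have hiT : ∀ v, g v ≠ i := by
          intro v hv
          refine hC ⟨v, ?_⟩; rw [← hi, ← hv]; exact hg v
        have hjT : ∀ v, g v ≠ j := by
          intro v hv
          refine hD ⟨v, ?_⟩; rw [← hj, ← hv]; exact hg v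
        let T : Finset (Fin k) := Finset.univ.image g
        have hT : T.card = k - 1 := by
          rw [Finset.card_image_of_injective _ ginj, Finset.card_univ, hs]
        have hiT' : i ∉ T := by
          simp only [T, Finset.mem_image]
          rintro ⟨v, -, hv⟩; exact hiT v hv
        have hjT' : j ∉ T := by
          simp only [T, Finset.mem_image]
          rintro ⟨v, -, hv⟩; exact hjT v hv
        have hins : (insert i (insert j T)).card = k + 1 := by
          rw [Finset.card_insert_of_notMem (by
              simp only [Finset.mem_insert]
              rintro (h | h); exacts [hij h, hiT' h]),
            Finset.card_insert_of_notMem hjT', hT]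
          omega
        have hle : (insert i (insert j T)).card ≤ k := by
          simpa using Finset.card_le_univ (insert i (insert j T))
        omega
  refine ⟨fun i => f ⁻¹' {i}, fun C => ⟨f C, rfl, fun j hj => hj.symm⟩, ?_⟩
  intro i u hu w hw hadj
  exact key u w hadj ((Set.mem_preimage.1 hu).trans (Set.mem_preimage.1 hw).symm)
end

section
/- Let k ≥ 1 and let X be a k-colorable graph without isolated vertices in which every edge is contained in a clique on k−1 vertices. Then for every vertex v of X the set φ_X(v) = {C ∈ V(B(X)) : v ∈ C} is a vertex of B²(X) = B(B(X)) (that is, it is a color class of some k-coloring of B(X)), and the map φ_X : V(X) → V(B²(X)) is a graph homomorphism from X to B²(X). -/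
open SimpleGraph

lemma class_indep {V : Type*} {k : ℕ} {X : SimpleGraph V} {S : Set V}
    (hS : IsColorClass k X S) : ∀ u ∈ S, ∀ w ∈ S, ¬ X.Adj u w := by
  obtain ⟨c, hc, i, rfl⟩ := hS
  exact hc.2 i

lemma key {V : Type*} {k : ℕ} {X : SimpleGraph V} {u w : V} (huw : X.Adj u w)
    (hs : ∃ s : Finset V, s.card = k - 1 ∧ X.IsClique ↑s ∧ u ∈ s ∧ w ∈ s) :
    ∃ γ : Fin k → Set {S : Set V // IsColorClass k X S},
      IsColoring k (ColoringComplex k X) γ ∧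
      (∃ i, γ i = phi k X u) ∧ (∃ j, γ j = phi k X w) := by
  classical
  obtain ⟨s, hcard, hclique, hus, hws⟩ := hs
  have hne : u ≠ w := huw.ne
  have hk3 : 3 ≤ k := by
    have h2 : 1 < s.card := Finset.one_lt_card.2 ⟨u, hus, w, hws, hne⟩
    omega
  set t : Finset V := (s.erase u).erase w with ht
  have hws' : w ∈ s.erase u := Finset.mem_erase.2 ⟨hne.symm, hws⟩
  have htcard : t.card = k - 3 := by
    rw [ht, Finset.card_erase_of_mem hws', Finset.card_erase_of_mem hus, hcard]
    omega
  have hmem : ∀ x ∈ s, x ≠ u → x ≠ w → x ∈ t := fun x hx h1 h2 =>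
    Finset.mem_erase.2 ⟨h2, Finset.mem_erase.2 ⟨h1, hx⟩⟩
  let e : t ≃ Fin t.card := t.equivFin
  let g : V → ℕ := fun x => if hx : x ∈ t then (e ⟨x, hx⟩).val + 2 else 0
  have hg_lt : ∀ x ∈ t, g x < k - 1 ∧ 2 ≤ g x := by
    intro x hx
    simp only [g, dif_pos hx]
    have := (e ⟨x, hx⟩).isLt
    omega
  have hg_inj : ∀ x ∈ t, ∀ y ∈ t, g x = g y → x = y := by
    intro x hx y hy h
    simp only [g, dif_pos hx, dif_pos hy] at h
    have := e.injective (Fin.ext (by omega : ((e ⟨x,hx⟩ : Fin t.card) : ℕ) = (e ⟨y,hy⟩ : Fin t.card)))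
    exact congrArg Subtype.val this
  let f : {S : Set V // IsColorClass k X S} → Fin k := fun C =>
    if u ∈ C.1 then ⟨0, by omega⟩
    else if w ∈ C.1 then ⟨1, by omega⟩
    else if h : ∃ x ∈ t, x ∈ C.1 then ⟨g h.choose, by
        have := hg_lt h.choose h.choose_spec.1; omega⟩
    else ⟨k - 1, by omega⟩
  have hf : ∀ C : {S : Set V // IsColorClass k X S},
      (u ∈ C.1 ∧ (f C).val = 0) ∨
      (u ∉ C.1 ∧ w ∈ C.1 ∧ (f C).val = 1) ∨
      (u ∉ C.1 ∧ w ∉ C.1 ∧ ∃ x ∈ t, x ∈ C.1 ∧ (f C).val = g x) ∨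
      (u ∉ C.1 ∧ w ∉ C.1 ∧ (∀ x ∈ t, x ∉ C.1) ∧ (f C).val = k - 1) := by
    intro C
    by_cases hu : u ∈ C.1
    · left; exact ⟨hu, by simp only [f, if_pos hu]⟩
    by_cases hw : w ∈ C.1
    · right; left; exact ⟨hu, hw, by simp only [f, if_neg hu, if_pos hw]⟩
    by_cases hx : ∃ x ∈ t, x ∈ C.1
    · right; right; left
      exact ⟨hu, hw, hx.choose, hx.choose_spec.1, hx.choose_spec.2,
        by simp only [f, if_neg hu, if_neg hw, dif_pos hx]⟩
    · right; right; right
      refine ⟨hu, hw, ?_, by simp only [f, if_neg hu, if_neg hw, dif_neg hx]⟩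
      push_neg at hx; exact hx
  refine ⟨fun i => {C | f C = i}, ⟨?_, ?_⟩, ⟨⟨0, by omega⟩, ?_⟩, ⟨⟨1, by omega⟩, ?_⟩⟩
  · intro C
    exact ⟨f C, rfl, fun j hj => hj.symm⟩
  · intro i C hC D hD hadj
    obtain ⟨hCD, c, hc, ⟨i₀, hi₀⟩, ⟨j₀, hj₀⟩⟩ := hadj
    simp only [Set.mem_setOf_eq] at hC hD
    have hval : (f C).val = (f D).val := congrArg Fin.val (hC.trans hD.symm)
    have hcommon : ∀ x, x ∈ C.1 → x ∈ D.1 → False := by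
      intro x hxC hxD
      obtain ⟨n, hn, huniq⟩ := hc.1 x
      have h1 : i₀ = n := huniq i₀ (by show x ∈ c i₀; rw [hi₀]; exact hxC)
      have h2 : j₀ = n := huniq j₀ (by show x ∈ c j₀; rw [hj₀]; exact hxD)
      exact hCD (Subtype.ext (by rw [← hi₀, ← hj₀, h1, h2]))
    rcases hf C with ⟨hC1, hC2⟩ | ⟨hC1, hC2, hC3⟩ | ⟨hC1, hC2, x, hx, hxC, hC3⟩ | ⟨hC1, hC2, hC3, hC4⟩ <;>
      rcases hf D with ⟨hD1, hD2⟩ | ⟨hD1, hD2, hD3⟩ | ⟨hD1, hD2, y, hy, hyD, hD3⟩ | ⟨hD1, hD2, hD3, hD4⟩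
    · exact hcommon u hC1 hD1
    · omega
    · have := hg_lt y hy; omega
    · omega
    · omega
    · exact hcommon w hC2 hD2
    · have := hg_lt y hy; omega
    · omega
    · have := hg_lt x hx; omega
    · have := hg_lt x hx; omega
    · have hxy : x = y := hg_inj x hx y hy (by omega)
      exact hcommon x hxC (hxy ▸ hyD)
    · have := hg_lt x hx; omega
    · omega
    · omega
    · have := hg_lt y hy; omega
    · -- counting case: both classes disjoint from s
      have hCs : ∀ x ∈ s, x ∉ C.1 := by
        intro x hx hxC
        by_cases h : x = u
        · exact hC1 (h ▸ hxC)
        by_cases h' : x = w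
        · exact hC2 (h' ▸ hxC)
        exact hC3 x (hmem x hx h h') hxC
      have hDs : ∀ x ∈ s, x ∉ D.1 := by
        intro x hx hxD
        by_cases h : x = u
        · exact hD1 (h ▸ hxD)
        by_cases h' : x = w
        · exact hD2 (h' ▸ hxD)
        exact hD3 x (hmem x hx h h') hxD
      have hij : i₀ ≠ j₀ := by
        intro h
        exact hCD (Subtype.ext (by rw [← hi₀, ← hj₀, h]))
      set m : V → Fin k := fun x => (hc.1 x).choose with hm_def
      have hm : ∀ x, x ∈ c (m x) := fun x => (hc.1 x).choose_spec.1
      have hminj : Set.InjOn m ↑s := by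
        intro x hx y hy hxy
        by_contra hne2
        exact hc.2 (m x) x (hm x) y (by rw [hxy]; exact hm y) (hclique hx hy hne2)
      have hA : (s.image m).card = k - 1 := by
        rw [Finset.card_image_of_injOn hminj, hcard]
      have hi₀A : i₀ ∉ s.image m := by
        intro h
        obtain ⟨x, hx, hxm⟩ := Finset.mem_image.1 h
        exact hCs x hx (by rw [← hi₀, ← hxm]; exact hm x)
      have hj₀A : j₀ ∉ s.image m := by
        intro h
        obtain ⟨x, hx, hxm⟩ := Finset.mem_image.1 h
        exact hDs x hx (by rw [← hj₀, ← hxm]; exact hm x)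
      have hle : (insert i₀ (insert j₀ (s.image m))).card ≤ k := by
        refine le_trans (Finset.card_le_univ _) ?_
        simp
      rw [Finset.card_insert_of_notMem (by simp [hi₀A, hij]),
        Finset.card_insert_of_notMem hj₀A, hA] at hle
      omega
  · ext C
    simp only [Set.mem_setOf_eq, phi]
    constructor
    · intro h
      have hv : (f C).val = 0 := congrArg Fin.val h
      rcases hf C with ⟨h1, h2⟩ | ⟨h1, h2, h3⟩ | ⟨h1, h2, x, hx, hxC, h3⟩ | ⟨h1, h2, h3, h4⟩
      · exact h1
      · omega
      · have := hg_lt x hx; omega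
      · omega
    · intro h
      rcases hf C with ⟨h1, h2⟩ | ⟨h1, _, _⟩ | ⟨h1, _, _⟩ | ⟨h1, _, _, _⟩
      · exact Fin.ext h2
      all_goals exact absurd h h1
  · ext C
    simp only [Set.mem_setOf_eq, phi]
    constructor
    · intro h
      have hv : (f C).val = 1 := congrArg Fin.val h
      rcases hf C with ⟨h1, h2⟩ | ⟨h1, h2, h3⟩ | ⟨h1, h2, x, hx, hxC, h3⟩ | ⟨h1, h2, h3, h4⟩
      · omega
      · exact h2
      · have := hg_lt x hx; omega
      · omega
    · intro h
      rcases hf C with ⟨h1, h2⟩ | ⟨h1, h2, h3⟩ | ⟨_, h2, _⟩ | ⟨_, h2, _, _⟩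
      · exact absurd huw (class_indep C.2 u h1 w h)
      · exact Fin.ext h3
      all_goals exact absurd h h2

lemma phi_ne {V : Type*} {k : ℕ} {X : SimpleGraph V} {a b : V} (hab : X.Adj a b)
    (hcol : ∃ c : Fin k → Set V, IsColoring k X c) :
    phi k X a ≠ phi k X b := by
  obtain ⟨c, hc⟩ := hcol
  obtain ⟨m, hm, -⟩ := hc.1 a
  intro h
  have hCa : (⟨c m, c, hc, m, rfl⟩ : {S : Set V // IsColorClass k X S}) ∈ phi k X a := hm
  have hCb : (⟨c m, c, hc, m, rfl⟩ : {S : Set V // IsColorClass k X S}) ∈ phi k X b := h ▸ hCa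
  exact hc.2 m a hm b hCb hab


/-- If `X` is a `k`-colorable graph without isolated vertices in which every
edge lies in a clique on `k - 1` vertices, then `φ_X(v)` is a vertex of
`B²(X)` for every vertex `v`, and `φ_X` is a graph homomorphism `X → B²(X)`. -/
theorem phi_is_hom {V : Type*} (k : ℕ) (hk : 1 ≤ k) (X : SimpleGraph V)
    (hcol : ∃ c : Fin k → Set V, IsColoring k X c)
    (hnoiso : ∀ v : V, ∃ u, X.Adj v u)
    (hedge : ∀ u w : V, X.Adj u w → ∃ s : Finset V,
      s.card = k - 1 ∧ X.IsClique ↑s ∧ u ∈ s ∧ w ∈ s) :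
    (∀ v : V, IsColorClass k (ColoringComplex k X) (phi k X v)) ∧
    ∃ f : X →g ColoringComplex k (ColoringComplex k X),
      ∀ v : V, (f v : {T // IsColorClass k (ColoringComplex k X) T}).1 = phi k X v := by
  have main : ∀ v : V, IsColorClass k (ColoringComplex k X) (phi k X v) := by
    intro v
    obtain ⟨u, hvu⟩ := hnoiso v
    obtain ⟨γ, hγ, hγ0, -⟩ := key hvu (hedge v u hvu)
    exact ⟨γ, hγ, hγ0⟩
  refine ⟨main, ⟨⟨fun v => ⟨phi k X v, main v⟩, ?_⟩, fun v => rfl⟩⟩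
  intro a b hab
  obtain ⟨γ, hγ, hi, hj⟩ := key hab (hedge a b hab)
  exact ⟨fun h => phi_ne hab hcol (congrArg Subtype.val h), γ, hγ, hi, hj⟩
end

section
/- Let F be a graph admitting a 3-coloring with color classes A, B and C. Suppose that F has no isolated vertices, that every edge of F is contained in exactly one triangle, and that the induced subgraph F[B ∪ C] is connected. If {A₁, A₂, A₃} and {A₁′, A₂′, A₃′} are 3-colorings of F such that Aᵢ ∩ A = Aᵢ′ ∩ A for i = 1, 2, 3, and A meets at least two of the classes A₁, A₂, A₃, then Aᵢ = Aᵢ′ for i = 1, 2, 3; that is, any 3-coloring of F that uses at least two colors on A is determined by its restriction to A. -/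
open SimpleGraph

lemma fin3_agree : ∀ p k q q' : Fin 3, p ≠ k → q ≠ p → q ≠ k → q' ≠ p → q' ≠ k → q = q' := by
  decide

lemma fin3_third : ∀ a b k : Fin 3, a ≠ b → a ≠ k → b ≠ k → -(a + b) = k := by decide

lemma fin3_nonzero : ∀ a b d : Fin 3,
    a ≠ b → a ≠ d → b ≠ d → a ≠ 0 → b ≠ 0 → d ≠ 0 → False := by decide

lemma walk_prop {V : Type*} {G : SimpleGraph V} {Q : V → Prop}
    (h : ∀ u v, G.Adj u v → Q u → Q v) : ∀ {u v : V}, G.Walk u v → Q u → Q v := by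
  intro u v p
  induction p with
  | nil => exact id
  | cons hadj _ ih => exact fun hu => ih (h _ _ hadj hu)

/-- Let `F` be a graph with a 3-coloring with classes `A`, `B`, `C`, without
isolated vertices, in which every edge lies in exactly one triangle and
`F[B ∪ C]` is connected. Then any 3-coloring of `F` using at least two colors
on `A` is determined by its restriction to `A`. -/
theorem coloring_determined_by_restriction {V : Type*} (F : SimpleGraph V)
    (A B C : Set V) (hABC : IsColoring 3 F ![A, B, C])
    (hnoiso : ∀ v : V, ∃ u, F.Adj v u)
    (htri : ∀ u w : V, F.Adj u w → ∃! x, F.Adj u x ∧ F.Adj w x)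
    (hconn : (F.induce (B ∪ C)).Connected)
    (c c' : Fin 3 → Set V)
    (hc : IsColoring 3 F c) (hc' : IsColoring 3 F c')
    (hres : ∀ i, c i ∩ A = c' i ∩ A)
    (htwo : ∃ i j : Fin 3, i ≠ j ∧ (c i ∩ A).Nonempty ∧ (c j ∩ A).Nonempty) :
    ∀ i, c i = c' i := by
  classical
  have hA1 : ∀ v, ∃ i, v ∈ ![A, B, C] i ∧ ∀ j, v ∈ ![A, B, C] j → j = i := hABC.1
  choose fA hfA hfAu using hA1
  have hc1 : ∀ v, ∃ i, v ∈ c i ∧ ∀ j, v ∈ c j → j = i := hc.1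
  choose f hf hfu using hc1
  have hc'1 : ∀ v, ∃ i, v ∈ c' i ∧ ∀ j, v ∈ c' j → j = i := hc'.1
  choose f' hf' hf'u using hc'1
  -- adjacency gives distinct colors
  have hadjA : ∀ {u w}, F.Adj u w → fA u ≠ fA w := by
    intro u w h he
    exact hABC.2 (fA u) u (hfA u) w (he ▸ hfA w) h
  have hadjf : ∀ {u w}, F.Adj u w → f u ≠ f w := by
    intro u w h he
    exact hc.2 (f u) u (hf u) w (he ▸ hf w) h
  have hadjf' : ∀ {u w}, F.Adj u w → f' u ≠ f' w := by
    intro u w h he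
    exact hc'.2 (f' u) u (hf' u) w (he ▸ hf' w) h
  -- membership in A iff fA = 0
  have memA : ∀ v, v ∈ A → fA v = 0 := fun v h => (hfAu v 0 (by simpa using h)).symm
  have memB : ∀ v, v ∈ B → fA v = 1 := fun v h => (hfAu v 1 (by simp [h])).symm
  have memC : ∀ v, v ∈ C → fA v = 2 := fun v h =>
    (hfAu v 2 (by simp [Matrix.cons_val_two, Matrix.tail_cons, Matrix.head_cons, h])).symm
  have hBC : ∀ v, v ∈ B ∪ C → fA v ≠ 0 := by
    intro v h
    rcases h with h | h
    · rw [memB v h]; decide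
    · rw [memC v h]; decide
  -- coverage
  have hcov : ∀ v, v ∈ A ∨ v ∈ B ∪ C := by
    intro v
    have h := hfA v
    have hall3 : ∀ i : Fin 3, i = 0 ∨ i = 1 ∨ i = 2 := by decide
    have h3 : fA v = 0 ∨ fA v = 1 ∨ fA v = 2 := hall3 (fA v)
    rcases h3 with h0 | h1 | h2
    · rw [h0] at h; simp only [Matrix.cons_val_zero] at h; exact Or.inl h
    · rw [h1] at h; simp only [Matrix.cons_val_one, Matrix.head_cons] at h
      exact Or.inr (Or.inl h)
    · rw [h2] at h
      simp only [Matrix.cons_val_two, Matrix.tail_cons, Matrix.head_cons] at h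
      exact Or.inr (Or.inr h)
  -- neighbors of A-vertices are in B ∪ C
  have hAnbr : ∀ a ∈ A, ∀ u, F.Adj a u → u ∈ B ∪ C := by
    intro a ha u hu
    rcases hcov u with h | h
    · exact absurd hu (hABC.2 0 a (by simpa using ha) u (by simpa using h))
    · exact h
  -- every A-vertex has a triangle into B ∪ C
  have triA : ∀ a ∈ A, ∃ b x, F.Adj a b ∧ F.Adj a x ∧ F.Adj b x ∧
      b ∈ B ∪ C ∧ x ∈ B ∪ C := by
    intro a ha
    obtain ⟨u, hu⟩ := hnoiso a
    obtain ⟨x, ⟨hax, hux⟩, -⟩ := htri a u hu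
    exact ⟨u, x, hu, hax, hux, hAnbr a ha u hu, hAnbr a ha x hax⟩
  -- every edge inside B ∪ C has an apex in A
  have apex : ∀ u w, u ∈ B ∪ C → w ∈ B ∪ C → F.Adj u w →
      ∃ a, a ∈ A ∧ F.Adj u a ∧ F.Adj w a := by
    intro u w hu hw huw
    obtain ⟨x, ⟨hux, hwx⟩, -⟩ := htri u w huw
    rcases hcov x with h | h
    · exact ⟨x, h, hux, hwx⟩
    · exact (fin3_nonzero (fA u) (fA w) (fA x)
        (hadjA huw) (hadjA hux) (hadjA hwx) (hBC u hu) (hBC w hw) (hBC x h)).elim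
  -- c and c' agree on A
  have agreeA : ∀ a ∈ A, f a = f' a := by
    intro a ha
    have h1 : a ∈ c (f a) ∩ A := ⟨hf a, ha⟩
    rw [hres (f a)] at h1
    exact hf'u a (f a) h1.1
  by_cases hcase : ∃ u, u ∈ B ∪ C ∧ f u = f' u
  · -- agreement propagates over B ∪ C
    obtain ⟨u0, hu0, hfu0⟩ := hcase
    have step : ∀ x y : ↥(B ∪ C), (F.induce (B ∪ C)).Adj x y →
        f x.1 = f' x.1 → f y.1 = f' y.1 := by
      rintro ⟨u, hu⟩ ⟨w, hw⟩ hxy he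
      have huw : F.Adj u w := hxy
      obtain ⟨a, ha, hua, hwa⟩ := apex u w hu hw huw
      have hk : f a = f' a := agreeA a ha
      refine fin3_agree (f u) (f a) (f w) (f' w) (hadjf hua) (Ne.symm (hadjf huw))
        (hadjf hwa) ?_ ?_
      · rw [he]; exact Ne.symm (hadjf' huw)
      · rw [hk]; exact hadjf' hwa
    have agreeBC : ∀ w ∈ B ∪ C, f w = f' w := by
      intro w hw
      obtain ⟨p⟩ := hconn.preconnected ⟨u0, hu0⟩ ⟨w, hw⟩
      exact walk_prop step p hfu0
    have hall : ∀ v, f v = f' v := by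
      intro v
      rcases hcov v with h | h
      · exact agreeA v h
      · exact agreeBC v h
    intro i
    ext v
    constructor
    · intro hv
      have : i = f v := hfu v i hv
      rw [this, hall v]; exact hf' v
    · intro hv
      have : i = f' v := hf'u v i hv
      rw [this, ← hall v]; exact hf v
  · -- total disagreement on B ∪ C: contradiction
    push_neg at hcase
    exfalso
    set m : V → Fin 3 := fun v => -(f v + f' v) with hm
    have step : ∀ x y : ↥(B ∪ C), (F.induce (B ∪ C)).Adj x y →
        m x.1 = m y.1 := by
      rintro ⟨u, hu⟩ ⟨w, hw⟩ hxy
      have huw : F.Adj u w := hxy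
      obtain ⟨a, ha, hua, hwa⟩ := apex u w hu hw huw
      have hk : f a = f' a := agreeA a ha
      have h1 : m u = f a := fin3_third _ _ _ (hcase u hu) (hadjf hua)
        (by rw [hk]; exact hadjf' hua)
      have h2 : m w = f a := fin3_third _ _ _ (hcase w hw) (hadjf hwa)
        (by rw [hk]; exact hadjf' hwa)
      rw [h1, h2]
    obtain ⟨u0⟩ := hconn.nonempty
    have mconst : ∀ w ∈ B ∪ C, m w = m u0.1 := by
      intro w hw
      obtain ⟨p⟩ := hconn.preconnected u0 ⟨w, hw⟩
      exact walk_prop (Q := fun x : ↥(B ∪ C) => m x.1 = m u0.1)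
        (fun x y hxy hx => (step x y hxy).symm.trans hx) p rfl
    have hAconst : ∀ a ∈ A, f a = m u0.1 := by
      intro a ha
      obtain ⟨b, x, hab, hax, hbx, hb, hx⟩ := triA a ha
      have hk : f a = f' a := agreeA a ha
      have h1 : m b = f a := fin3_third _ _ _ (hcase b hb) (Ne.symm (hadjf hab))
        (by rw [hk]; exact Ne.symm (hadjf' hab))
      rw [← h1, mconst b hb]
    obtain ⟨i, j, hij, ⟨a1, ha1c, ha1A⟩, ⟨a2, ha2c, ha2A⟩⟩ := htwo
    have h1 : i = f a1 := hfu a1 i ha1c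
    have h2 : j = f a2 := hfu a2 j ha2c
    exact hij (by rw [h1, h2, hAconst a1 ha1A, hAconst a2 ha2A])
end

section
/- Let G be an edge-reflexive cubic graph without half-edges, let k ≥ 1, and let H be the cubic graph obtained from G by subdividing a single edge of G k times, adding a half-edge at each of the k new subdivision vertices so that H is cubic. Then H is not edge-reflexive. -/
open SimpleGraph

/-- A cubic graph, possibly with half-edges (edges incident with a single
vertex, recorded as edges whose set of ends is a singleton), without parallel
edges: every vertex is incident with exactly three edges. -/
structure CubicGraph (V E : Type*) [DecidableEq V] where
  ends : E → Finset V
  ends_card : ∀ e, (ends e).card = 1 ∨ (ends e).card = 2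
  no_parallel : ∀ e f, (ends e).card = 2 → ends e = ends f → e = f
  cubic : ∀ v : V, ∃ a b c : E, a ≠ b ∧ a ≠ c ∧ b ≠ c ∧
    ∀ f : E, v ∈ ends f ↔ f = a ∨ f = b ∨ f = c

/-- The line graph of a cubic graph: its vertices are the edges of `G`
(including half-edges), two of them adjacent when they share an endpoint. -/
def lineGraph {V E : Type*} [DecidableEq V] (G : CubicGraph V E) : SimpleGraph E where
  Adj e f := e ≠ f ∧ (G.ends e ∩ G.ends f).Nonempty
  symm := by constructor; rintro e f ⟨hne, hint⟩; exact ⟨hne.symm, by rwa [Finset.inter_comm]⟩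
  loopless := by constructor; rintro e ⟨hne, -⟩; exact hne rfl

/-- A cubic graph is edge-reflexive if its line graph is reflexive for
3-colorings. -/
def EdgeReflexive {V E : Type*} [DecidableEq V] (G : CubicGraph V E) : Prop :=
  IsReflexive 3 (lineGraph G)

/-- A cubic graph is edge-colorful if its line graph is colorful for
3-colorings. -/
def EdgeColorful {V E : Type*} [DecidableEq V] (G : CubicGraph V E) : Prop :=
  Colorful 3 (lineGraph G)

/-- The underlying simple graph of a cubic graph: two vertices are adjacent
when some (full) edge joins them. -/
def underlying {V E : Type*} [DecidableEq V] (G : CubicGraph V E) : SimpleGraph V where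
  Adj u w := u ≠ w ∧ ∃ e, G.ends e = {u, w}
  symm := by constructor; rintro u w ⟨hne, e, he⟩; exact ⟨hne.symm, e, by rwa [Finset.pair_comm]⟩
  loopless := by constructor; rintro u ⟨hne, -⟩; exact hne rfl

/-- If `G` is an edge-reflexive cubic graph without half-edges and `H` is
obtained from `G` by subdividing a single edge `e = ab` of `G` `k ≥ 1` times
(creating new vertices `x₀, …, x_{k-1}` forming a path from `a` to `b`, with a
new half-edge at each `xᵢ`), then `H` is not edge-reflexive. -/
theorem subdivided_not_edgeReflexive {V E : Type*} [DecidableEq V] [DecidableEq E] [Fintype V] [Fintype E]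
    (G : CubicGraph V E) (hfull : ∀ f : E, (G.ends f).card = 2)
    (hG : EdgeReflexive G)
    (k : ℕ) (hk : 0 < k)
    (e : E) (a b : V) (hab : a ≠ b) (he : G.ends e = {a, b})
    (H : CubicGraph (V ⊕ Fin k) (E ⊕ (Fin k ⊕ Fin k)))
    (hH : ∀ f : E ⊕ (Fin k ⊕ Fin k), H.ends f = Sum.elim
      (fun f' : E => if f' = e
        then ({Sum.inl a, Sum.inr (⟨0, hk⟩ : Fin k)} : Finset (V ⊕ Fin k))
        else (G.ends f').image Sum.inl)
      (Sum.elim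
        (fun i : Fin k => if h : (i : ℕ) + 1 < k
          then ({Sum.inr i, Sum.inr (⟨(i : ℕ) + 1, h⟩ : Fin k)} : Finset (V ⊕ Fin k))
          else {Sum.inr i, Sum.inl b})
        (fun i : Fin k => ({Sum.inr i} : Finset (V ⊕ Fin k)))) f) :
    ¬ EdgeReflexive H := by
  
  classical
  intro hER
  obtain ⟨F, hFspec⟩ := hER
  have hklt : k - 1 < k := Nat.sub_lt hk one_pos
  -- |V| is even
  have evenV : Even (Fintype.card V) := by
    have hdeg : ∀ v : V, (Finset.univ.filter fun f : E => v ∈ G.ends f).card = 3 := by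
      intro v
      obtain ⟨α, β, γ, h1, h2, h3, hiff⟩ := G.cubic v
      have hset : (Finset.univ.filter fun f : E => v ∈ G.ends f) = {α, β, γ} := by
        ext g
        simp only [Finset.mem_filter, Finset.mem_univ, true_and, Finset.mem_insert,
          Finset.mem_singleton]
        exact hiff g
      rw [hset, Finset.card_insert_of_notMem (by simp [h1, h2]),
        Finset.card_insert_of_notMem (by simp [h3]), Finset.card_singleton]
    have hsum : ∑ f : E, (G.ends f).card = 3 * Fintype.card V := by
      calc ∑ f : E, (G.ends f).card
          = ∑ f : E, ∑ v : V, (if v ∈ G.ends f then 1 else 0) := by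
            refine Finset.sum_congr rfl fun f _ => ?_
            rw [Finset.sum_boole]
            simp [Finset.filter_univ_mem]
        _ = ∑ v : V, ∑ f : E, (if v ∈ G.ends f then 1 else 0) := Finset.sum_comm
        _ = ∑ v : V, 3 := by
            refine Finset.sum_congr rfl fun v _ => ?_
            rw [Finset.sum_boole]
            simp [hdeg v]
        _ = 3 * Fintype.card V := by
            rw [Finset.sum_const, Finset.card_univ, smul_eq_mul, mul_comm]
    have hsum2 : ∑ f : E, (G.ends f).card = 2 * Fintype.card E := by
      rw [Finset.sum_congr rfl fun f _ => hfull f, Finset.sum_const, Finset.card_univ,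
        smul_eq_mul, mul_comm]
    have h3V : 3 * Fintype.card V = 2 * Fintype.card E := by rw [← hsum, hsum2]
    have : Even (3 * Fintype.card V) := by rw [h3V]; exact even_two_mul _
    rcases Nat.even_mul.mp this with h | h
    · exact absurd h (by decide)
    · exact h
  -- ends computations
  have hEnds_e : H.ends (Sum.inl e) = {Sum.inl a, Sum.inr (⟨0, hk⟩ : Fin k)} := by
    rw [hH]; simp
  have hEnds_f : ∀ f : E, f ≠ e → H.ends (Sum.inl f) = (G.ends f).image Sum.inl := by
    intro f hf; rw [hH]; simp [hf]
  -- the key forcing lemma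
  have key : ∀ c : Fin 3 → Set (E ⊕ (Fin k ⊕ Fin k)), IsColoring 3 (lineGraph H) c →
      ∀ i : Fin 3, Sum.inl e ∈ c i → Sum.inr (Sum.inl (⟨k - 1, hklt⟩ : Fin k)) ∈ c i := by
    intro c hc i hui
    by_contra hwi
    have hind : ∀ (j : Fin 3) (g g' : E ⊕ (Fin k ⊕ Fin k)), g ≠ g' → g ∈ c j → g' ∈ c j →
        ∀ x, x ∈ H.ends g → x ∈ H.ends g' → False := by
      intro j g g' hne hg hg' x hx hx'
      exact hc.2 j g hg g' hg' ⟨hne, x, Finset.mem_inter.mpr ⟨hx, hx'⟩⟩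
    have trich : ∀ i iα iβ iγ : Fin 3, iα ≠ iβ → iα ≠ iγ → iβ ≠ iγ →
        i = iα ∨ i = iβ ∨ i = iγ := by decide
    have hvert : ∀ x : V ⊕ Fin k, ∃ g, g ∈ c i ∧ x ∈ H.ends g := by
      intro x
      obtain ⟨α, β, γ, h1, h2, h3, hiff⟩ := H.cubic x
      have hxα : x ∈ H.ends α := (hiff α).mpr (Or.inl rfl)
      have hxβ : x ∈ H.ends β := (hiff β).mpr (Or.inr (Or.inl rfl))
      have hxγ : x ∈ H.ends γ := (hiff γ).mpr (Or.inr (Or.inr rfl))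
      obtain ⟨iα, hiα, -⟩ := hc.1 α
      obtain ⟨iβ, hiβ, -⟩ := hc.1 β
      obtain ⟨iγ, hiγ, -⟩ := hc.1 γ
      have d1 : iα ≠ iβ := fun hEq => hind iβ α β h1 (hEq ▸ hiα) hiβ x hxα hxβ
      have d2 : iα ≠ iγ := fun hEq => hind iγ α γ h2 (hEq ▸ hiα) hiγ x hxα hxγ
      have d3 : iβ ≠ iγ := fun hEq => hind iγ β γ h3 (hEq ▸ hiβ) hiγ x hxβ hxγ
      rcases trich i iα iβ iγ d1 d2 d3 with h | h | h
      · exact ⟨α, by rw [h]; exact hiα, hxα⟩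
      · exact ⟨β, by rw [h]; exact hiβ, hxβ⟩
      · exact ⟨γ, by rw [h]; exact hiγ, hxγ⟩
    set Fm : Finset E := Finset.univ.filter (fun f => f ≠ e ∧ Sum.inl f ∈ c i) with hFm
    have hsub : ∀ f ∈ Fm, ∀ v : V, v ∈ G.ends f → v ≠ a := by
      intro f hf v hv hva
      rw [hFm, Finset.mem_filter] at hf
      subst hva
      exact hind i (Sum.inl f) (Sum.inl e) (by simp [hf.2.1]) hf.2.2 hui (Sum.inl v)
        (by rw [hEnds_f f hf.2.1]; exact Finset.mem_image_of_mem _ hv)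
        (by rw [hEnds_e]; simp)
    have hcover : ∀ v : V, v ≠ a → ∃ f ∈ Fm, v ∈ G.ends f := by
      intro v hva
      obtain ⟨g, hgc, hgx⟩ := hvert (Sum.inl v)
      rcases g with f | i0 | i0
      · by_cases hfe : f = e
        · subst hfe
          rw [hEnds_e] at hgx
          simp only [Finset.mem_insert, Finset.mem_singleton] at hgx
          rcases hgx with h | h
          · exact absurd (Sum.inl.inj h) hva
          · exact absurd h (by simp)
        · have hvf : v ∈ G.ends f := by
            rw [hEnds_f f hfe] at hgx
            obtain ⟨v', hv', hvv⟩ := Finset.mem_image.mp hgx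
            exact (Sum.inl.inj hvv) ▸ hv'
          exact ⟨f, by rw [hFm]; simp [hfe, hgc], hvf⟩
      · rw [hH] at hgx
        simp only [Sum.elim_inr, Sum.elim_inl] at hgx
        by_cases hlt : (i0 : ℕ) + 1 < k
        · rw [dif_pos hlt] at hgx
          simp at hgx
        · rw [dif_neg hlt] at hgx
          have hi0 : i0 = (⟨k - 1, hklt⟩ : Fin k) := by
            have hlt2 := i0.isLt
            apply Fin.ext
            show (i0 : ℕ) = k - 1
            omega
          rw [hi0] at hgc
          exact absurd hgc hwi
      · rw [hH] at hgx
        simp at hgx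
    have hdisj : ∀ f1 ∈ Fm, ∀ f2 ∈ Fm, f1 ≠ f2 → Disjoint (G.ends f1) (G.ends f2) := by
      intro f1 h1 f2 h2 hne
      rw [Finset.disjoint_left]
      intro v hv1 hv2
      rw [hFm, Finset.mem_filter] at h1 h2
      exact hind i (Sum.inl f1) (Sum.inl f2) (by simp [hne]) h1.2.2 h2.2.2 (Sum.inl v)
        (by rw [hEnds_f _ h1.2.1]; exact Finset.mem_image_of_mem _ hv1)
        (by rw [hEnds_f _ h2.2.1]; exact Finset.mem_image_of_mem _ hv2)
    have hbi : Fm.biUnion G.ends = Finset.univ.erase a := by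
      ext v
      simp only [Finset.mem_biUnion, Finset.mem_erase, Finset.mem_univ, and_true]
      constructor
      · rintro ⟨f, hf, hv⟩
        exact hsub f hf v hv
      · exact hcover v
    have hc1 : (Finset.univ.erase a).card = Fm.card * 2 := by
      rw [← hbi, Finset.card_biUnion hdisj,
        Finset.sum_congr rfl fun f _ => hfull f, Finset.sum_const, smul_eq_mul]
    have hc2 : (Finset.univ.erase a).card = Fintype.card V - 1 := by
      rw [Finset.card_erase_of_mem (Finset.mem_univ a), Finset.card_univ]
    have hpos : 0 < Fintype.card V := Fintype.card_pos_iff.mpr ⟨a⟩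
    obtain ⟨m, hm⟩ := evenV
    omega
  -- phi identifies the two edges
  have hphi : phi 3 (lineGraph H) (Sum.inl e)
      = phi 3 (lineGraph H) (Sum.inr (Sum.inl (⟨k - 1, hklt⟩ : Fin k))) := by
    ext C
    obtain ⟨c, hc, l, hl⟩ := C.2
    simp only [phi, Set.mem_setOf_eq, ← hl]
    constructor
    · exact key c hc l
    · intro hwl
      obtain ⟨i0, hi0, huniq⟩ := hc.1 (Sum.inl e)
      obtain ⟨j0, hj0, hwuniq⟩ := hc.1 (Sum.inr (Sum.inl (⟨k - 1, hklt⟩ : Fin k)))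
      have h1 : l = j0 := hwuniq l hwl
      have h2 : i0 = j0 := hwuniq i0 (key c hc i0 hi0)
      rw [h1, ← h2]
      exact hi0
  have hFeq : F (Sum.inl e) = F (Sum.inr (Sum.inl (⟨k - 1, hklt⟩ : Fin k))) :=
    Subtype.ext (by rw [hFspec, hFspec, hphi])
  exact absurd (F.injective hFeq) (by simp)
end
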